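/- Let E ⊆ F be a field extension, let C_1 ⊆ F^ℓ be a nonzero F-linear code endowed with the Hamming metric, and let C_2 ⊆ F^N be a nonzero F-linear code endowed with the rank metric for F/E. Then the minimum sum-rank distance of the product code C_1 ⊗ C_2 ⊆ F^{ℓN}, with respect to the partition (N, …, N) and the extension F/E, satisfies d_SR(C_1 ⊗ C_2) = d_H(C_1) · d_R(C_2). -/

import Mathlib

/-- The Hamming weight of a vector: the number of nonzero coordinates. -/
noncomputable def hammingWt {F : Type*} [Zero F] {ℓ : ℕ} (u : Fin ℓ → F) : ℕ :=
  Nat.card {i : Fin ℓ // u i ≠ 0}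

/-- The rank weight of a vector over `F` with respect to the extension `F/E`. -/
noncomputable def rankWt (E : Type*) {F : Type*} [Field E] [Field F] [Algebra E F]
    {N : ℕ} (v : Fin N → F) : ℕ :=
  Module.finrank E (Submodule.span E (Set.range v) : Submodule E F)

/-- The sum-rank weight w.r.t. the partition `(N,…,N)` and the extension `F/E`. -/
noncomputable def srWt (E : Type*) {F : Type*} [Field E] [Field F] [Algebra E F]
    {ℓ N : ℕ} (c : Fin ℓ → Fin N → F) : ℕ :=
  ∑ i, rankWt E (c i)

/-- The product code `C₁ ⊗ C₂`: the `F`-span of the elementary tensors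
`u ⊗ v = (u₀v | … | u_{ℓ-1}v)` with `u ∈ C₁`, `v ∈ C₂`. -/
def prodCode (F : Type*) [Field F] {ℓ N : ℕ}
    (C₁ : Submodule F (Fin ℓ → F)) (C₂ : Submodule F (Fin N → F)) :
    Submodule F (Fin ℓ → Fin N → F) :=
  Submodule.span F {w | ∃ u ∈ C₁, ∃ v ∈ C₂, w = fun i j => u i * v j}

open Classical in
lemma hammingWt_eq {F : Type*} [Zero F] {ℓ : ℕ} (u : Fin ℓ → F) :
    hammingWt u = (Finset.univ.filter (fun i => u i ≠ 0)).card := by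
  rw [hammingWt, Nat.card_eq_fintype_card, Fintype.card_subtype]

lemma rankWt_zero (E : Type*) {F : Type*} [Field E] [Field F] [Algebra E F]
    {N : ℕ} : rankWt E (0 : Fin N → F) = 0 := by
  have : Submodule.span E (Set.range (0 : Fin N → F)) = ⊥ := by
    rw [Submodule.span_eq_bot]
    rintro x ⟨j, rfl⟩; rfl
  rw [rankWt, this, finrank_bot]

lemma rankWt_smul (E : Type*) {F : Type*} [Field E] [Field F] [Algebra E F]
    {N : ℕ} {a : F} (ha : a ≠ 0) (v : Fin N → F) :
    rankWt E (fun j => a * v j) = rankWt E v := by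
  have hinj : Function.Injective (LinearMap.mulLeft E a) := by
    intro x y h
    exact mul_left_cancel₀ ha h
  have hr : Set.range (fun j => a * v j) = (LinearMap.mulLeft E a) '' Set.range v := by
    rw [← Set.range_comp]; rfl
  rw [rankWt, hr, ← Submodule.map_span]
  exact (LinearEquiv.finrank_eq
    (Submodule.equivMapOfInjective _ hinj (Submodule.span E (Set.range v)))).symm

lemma prodCode_row_mem {F : Type*} [Field F] {ℓ N : ℕ}
    {C₁ : Submodule F (Fin ℓ → F)} {C₂ : Submodule F (Fin N → F)}
    {c : Fin ℓ → Fin N → F} (hc : c ∈ prodCode F C₁ C₂) (i : Fin ℓ) : c i ∈ C₂ := by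
  have hle : prodCode F C₁ C₂ ≤
      Submodule.comap (LinearMap.proj i : (Fin ℓ → Fin N → F) →ₗ[F] (Fin N → F)) C₂ := by
    apply Submodule.span_le.mpr
    rintro w ⟨u, hu, v, hv, rfl⟩
    show (fun j => u i * v j) ∈ C₂
    have h := C₂.smul_mem (u i) hv
    convert h using 1
    ext j; simp
  exact hle hc

lemma prodCode_col_mem {F : Type*} [Field F] {ℓ N : ℕ}
    {C₁ : Submodule F (Fin ℓ → F)} {C₂ : Submodule F (Fin N → F)}
    {c : Fin ℓ → Fin N → F} (hc : c ∈ prodCode F C₁ C₂) (j : Fin N) :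
    (fun i => c i j) ∈ C₁ := by
  let colMap : (Fin ℓ → Fin N → F) →ₗ[F] (Fin ℓ → F) :=
    LinearMap.pi fun i => (LinearMap.proj j : (Fin N → F) →ₗ[F] F).comp
      (LinearMap.proj i : (Fin ℓ → Fin N → F) →ₗ[F] (Fin N → F))
  have hle : prodCode F C₁ C₂ ≤ Submodule.comap colMap C₁ := by
    apply Submodule.span_le.mpr
    rintro w ⟨u, hu, v, hv, rfl⟩
    show (fun i => u i * v j) ∈ C₁
    have h := C₁.smul_mem (v j) hu
    convert h using 1
    ext i
    simp [mul_comm]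
  exact hle hc

/-- The minimum sum-rank distance of the product of a nonzero
Hamming-metric code `C₁` and a nonzero rank-metric code `C₂` is
`d_SR(C₁ ⊗ C₂) = d_H(C₁) · d_R(C₂)`. -/
theorem sumRankDist_prodCode (E F : Type*) [Field E] [Field F] [Algebra E F]
    (ℓ N : ℕ) (hℓ : 0 < ℓ) (hN : 0 < N)
    (C₁ : Submodule F (Fin ℓ → F)) (C₂ : Submodule F (Fin N → F))
    (hC₁ : C₁ ≠ ⊥) (hC₂ : C₂ ≠ ⊥) (dH dR : ℕ)
    (hdH : IsLeast {w : ℕ | ∃ u ∈ C₁, u ≠ 0 ∧ hammingWt u = w} dH)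
    (hdR : IsLeast {w : ℕ | ∃ v ∈ C₂, v ≠ 0 ∧ rankWt E v = w} dR) :
    IsLeast {w : ℕ | ∃ c ∈ prodCode F C₁ C₂, c ≠ 0 ∧ srWt E c = w} (dH * dR) := by
  classical
  obtain ⟨u, hu, hu0, hwu⟩ := hdH.1
  obtain ⟨v, hv, hv0, hwv⟩ := hdR.1
  constructor
  · -- membership: c = u ⊗ v achieves dH * dR
    refine ⟨fun i j => u i * v j, ?_, ?_, ?_⟩
    · exact Submodule.subset_span ⟨u, hu, v, hv, rfl⟩
    · obtain ⟨i, hi⟩ := Function.ne_iff.mp hu0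
      obtain ⟨j, hj⟩ := Function.ne_iff.mp hv0
      intro h
      have := congrFun (congrFun h i) j
      exact mul_ne_zero hi hj this
    · have : ∀ i, rankWt E (fun j => u i * v j) = if u i ≠ 0 then dR else 0 := by
        intro i
        by_cases h : u i = 0
        · rw [if_neg (not_not.mpr h)]
          have h0 : (fun j => u i * v j) = (0 : Fin N → F) := by ext j; simp [h]
          rw [h0, rankWt_zero]
        · rw [if_pos h, rankWt_smul E h v, hwv]
      rw [srWt]
      simp only [this]
      rw [Finset.sum_ite, Finset.sum_const, Finset.sum_const, smul_zero, add_zero,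
        smul_eq_mul]
      rw [hammingWt_eq] at hwu
      rw [hwu]
  · -- lower bound
    rintro w ⟨c, hc, hc0, rfl⟩
    obtain ⟨i₀, hi₀⟩ := Function.ne_iff.mp hc0
    obtain ⟨j₀, hj₀⟩ := Function.ne_iff.mp hi₀
    set col : Fin ℓ → F := fun i => c i j₀ with hcol
    have hcolC : col ∈ C₁ := prodCode_col_mem hc j₀
    have hcol0 : col ≠ 0 := fun h => hj₀ (congrFun h i₀)
    have hdHle : dH ≤ hammingWt col := hdH.2 ⟨col, hcolC, hcol0, rfl⟩
    set S : Finset (Fin ℓ) := Finset.univ.filter (fun i => c i ≠ 0) with hS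
    have hsub : Finset.univ.filter (fun i => col i ≠ 0) ⊆ S := by
      intro i hi
      rw [Finset.mem_filter] at hi
      rw [hS, Finset.mem_filter]
      refine ⟨Finset.mem_univ i, fun h => hi.2 ?_⟩
      show c i j₀ = 0
      rw [h]; rfl
    have hcard : dH ≤ S.card := by
      calc dH ≤ hammingWt col := hdHle
        _ = (Finset.univ.filter (fun i => col i ≠ 0)).card := hammingWt_eq col
        _ ≤ S.card := Finset.card_le_card hsub
    calc dH * dR ≤ S.card * dR := Nat.mul_le_mul_right dR hcard
      _ = ∑ _i ∈ S, dR := by rw [Finset.sum_const, smul_eq_mul]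
      _ ≤ ∑ i ∈ S, rankWt E (c i) := by
          apply Finset.sum_le_sum
          intro i hi
          simp only [hS, Finset.mem_filter] at hi
          exact hdR.2 ⟨c i, prodCode_row_mem hc i, hi.2, rfl⟩
      _ ≤ ∑ i, rankWt E (c i) := Finset.sum_le_sum_of_subset (Finset.filter_subset _ _)
      _ = srWt E c := rfl
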